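/- Let n ≥ 2 and let N be an n×n matrix over ℤ with entries in {0,1}, N² = 0, and suppose (N·Nᵀ)_{ij} ≤ 1 for all i ≠ j (i.e., the quiver contains no full subquiver Ã_{2,2}). Set C = I − N, φ(X) = det(X•C + Cᵀ), d_i = Σ_j N_{ij} + Σ_j N_{ji}, and e = (Σ_i d_i)/2. Then φ.coeff(n−1) = n − e and 2·φ.coeff(n−2) = (n−e)(n−1−e) + 2e − Σ_{i=1}^{n} d_i(d_i−1); in particular the coefficients a₁ and a₂ of the Coxeter polynomial depend only on the degrees d₁,…,d_n. -/

import Mathlib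

open Polynomial Matrix Equiv Finset

variable {n : ℕ}

/-- entry of `X • 1 + M.map C` -/
lemma entry_eq (M : Matrix (Fin n) (Fin n) ℤ) (i j : Fin n) :
    ((X : ℤ[X]) • (1 : Matrix (Fin n) (Fin n) ℤ[X]) + M.map Polynomial.C) i j
      = (if i = j then (X:ℤ[X]) else 0) + Polynomial.C (M i j) := by
  simp [Matrix.add_apply, Matrix.smul_apply, Matrix.one_apply, Matrix.map_apply,
    apply_ite (fun p : ℤ[X] => (X:ℤ[X]) * p)]

lemma prod_sigma_eq (M : Matrix (Fin n) (Fin n) ℤ) (σ : Perm (Fin n)) :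
    (∏ i, ((X : ℤ[X]) • (1 : Matrix (Fin n) (Fin n) ℤ[X]) + M.map Polynomial.C) (σ i) i)
      = (∏ i ∈ σ.supportᶜ, ((X:ℤ[X]) + Polynomial.C (M i i)))
        * Polynomial.C (∏ i ∈ σ.support, M (σ i) i) := by
  rw [← Finset.prod_mul_prod_compl σ.support, mul_comm, map_prod]
  congr 1
  · apply Finset.prod_congr rfl
    intro i hi
    rw [Finset.mem_compl, Equiv.Perm.notMem_support] at hi
    rw [entry_eq, hi, if_pos rfl]
  · apply Finset.prod_congr rfl
    intro i hi
    rw [Equiv.Perm.mem_support] at hi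
    rw [entry_eq, if_neg hi, zero_add]

lemma natDegree_prod_sigma_le (M : Matrix (Fin n) (Fin n) ℤ) (σ : Perm (Fin n)) :
    ((∏ i ∈ σ.supportᶜ, ((X:ℤ[X]) + Polynomial.C (M i i)))
        * Polynomial.C (∏ i ∈ σ.support, M (σ i) i)).natDegree ≤ σ.supportᶜ.card := by
  refine (Polynomial.natDegree_mul_le).trans ?_
  rw [Polynomial.natDegree_C, add_zero]
  refine (Polynomial.natDegree_prod_le _ _).trans ?_
  calc ∑ i ∈ σ.supportᶜ, ((X:ℤ[X]) + Polynomial.C (M i i)).natDegree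
      ≤ ∑ _i ∈ σ.supportᶜ, 1 := Finset.sum_le_sum (fun i _ => le_of_eq (Polynomial.natDegree_X_add_C _))
    _ = σ.supportᶜ.card := by simp

lemma coeff_det_eq_sum (M : Matrix (Fin n) (Fin n) ℤ) (k : ℕ) :
    (((X : ℤ[X]) • (1 : Matrix (Fin n) (Fin n) ℤ[X]) + M.map Polynomial.C).det).coeff k
      = ∑ σ : Perm (Fin n), (Equiv.Perm.sign σ : ℤ) *
          ((∏ i ∈ σ.supportᶜ, ((X:ℤ[X]) + Polynomial.C (M i i)))
            * Polynomial.C (∏ i ∈ σ.support, M (σ i) i)).coeff k := by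
  rw [Matrix.det_apply, Polynomial.finset_sum_coeff]
  apply Finset.sum_congr rfl
  intro σ _
  rw [prod_sigma_eq]
  rcases Int.units_eq_one_or (Equiv.Perm.sign σ) with h | h <;> simp [h]

lemma coeff_vanish (M : Matrix (Fin n) (Fin n) ℤ) (σ : Perm (Fin n)) {k : ℕ}
    (h : σ.supportᶜ.card < k) :
    ((∏ i ∈ σ.supportᶜ, ((X:ℤ[X]) + Polynomial.C (M i i)))
        * Polynomial.C (∏ i ∈ σ.support, M (σ i) i)).coeff k = 0 :=
  Polynomial.coeff_eq_zero_of_natDegree_lt (lt_of_le_of_lt (natDegree_prod_sigma_le M σ) h)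

lemma compl_card_lt (σ : Perm (Fin n)) (hσ : σ ≠ 1) {k : ℕ} (hk : 2 ≤ n → n - 2 < k) :
    σ.supportᶜ.card < k := by
  have h2 : 2 ≤ σ.support.card := Equiv.Perm.one_lt_card_support_of_ne_one hσ
  have hle : σ.support.card ≤ n := by
    simpa using Finset.card_le_univ σ.support
  rw [Finset.card_compl]
  simp only [Fintype.card_fin]
  have := hk (le_trans h2 hle)
  omega

lemma coeff_det_top (hn : 1 ≤ n) (M : Matrix (Fin n) (Fin n) ℤ) :
    (((X : ℤ[X]) • (1 : Matrix (Fin n) (Fin n) ℤ[X]) + M.map Polynomial.C).det).coeff (n-1)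
      = Matrix.trace M := by
  rw [coeff_det_eq_sum]
  rw [Finset.sum_eq_single 1]
  · simp only [Equiv.Perm.support_one, Finset.compl_empty, Equiv.Perm.sign_one, Units.val_one,
      Int.cast_one, one_mul, Finset.prod_empty, _root_.map_one, mul_one]
    rw [Finset.prod_X_add_C_coeff (Finset.univ : Finset (Fin n)) (fun i => M i i)
      (k := n - 1) (by simp [Nat.sub_le])]
    have hcard : (Finset.univ : Finset (Fin n)).card - (n - 1) = 1 := by
      simp only [Finset.card_univ, Fintype.card_fin]; omega
    rw [hcard, Finset.powersetCard_one]
    rw [Finset.sum_map]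
    simp [Matrix.trace, Matrix.diag]
  · intro σ _ hσ
    rw [coeff_vanish M σ (compl_card_lt σ hσ (fun h2 => by omega))]
    ring
  · intro h
    exact absurd (Finset.mem_univ 1) h

lemma two_mul_esymm_two {ι : Type*} [DecidableEq ι] (s : Finset ι) (f : ι → ℤ) :
    2 * ∑ t ∈ s.powersetCard 2, ∏ i ∈ t, f i
      = (∑ i ∈ s, f i)^2 - ∑ i ∈ s, (f i)^2 := by
  induction s using Finset.induction_on with
  | empty =>
    have h : (∅ : Finset ι).powersetCard 2 = ∅ := by
      rw [Finset.powersetCard_eq_empty]; simp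
    simp [h]
  | @insert x s hx ih =>
    rw [show (insert x s).powersetCard 2
        = s.powersetCard 2 ∪ (s.powersetCard 1).image (insert x) from
      Finset.powersetCard_succ_insert hx 1]
    have hdisj : Disjoint (Finset.powersetCard 2 s)
        ((Finset.powersetCard 1 s).image (insert x)) := by
      rw [Finset.disjoint_left]
      intro t ht ht'
      rw [Finset.mem_powersetCard] at ht
      obtain ⟨u, hu, rfl⟩ := Finset.mem_image.1 ht'
      exact hx (ht.1 (Finset.mem_insert_self x u))
    rw [Finset.sum_union hdisj]
    have himg : ∑ t ∈ (Finset.powersetCard 1 s).image (insert x), ∏ i ∈ t, f i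
        = f x * ∑ i ∈ s, f i := by
      rw [Finset.sum_image]
      · rw [Finset.powersetCard_one, Finset.sum_map, Finset.mul_sum]
        apply Finset.sum_congr rfl
        intro i hi
        have hxi : x ∉ ({i} : Finset ι) := by
          simp only [Finset.mem_singleton]
          rintro rfl; exact hx hi
        simp [Finset.prod_insert hxi]
      · intro t ht u hu h
        rw [Finset.mem_coe, Finset.mem_powersetCard] at ht hu
        have hxt : x ∉ t := fun hc => hx (ht.1 hc)
        have hxu : x ∉ u := fun hc => hx (hu.1 hc)
        have := congrArg (Finset.erase · x) h
        simpa [Finset.erase_insert_of_ne, Finset.erase_insert hxt,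
          Finset.erase_insert hxu] using this
    rw [himg, Finset.sum_insert hx, Finset.sum_insert hx]
    ring_nf
    ring_nf at ih
    linarith [ih]

lemma double_sum_split (g : Fin n → Fin n → ℤ) (hg : ∀ i j, g i j = g j i) :
    ∑ i, ∑ j, g i j
      = 2 * (∑ i, ∑ j, if i < j then g i j else 0) + ∑ i, g i i := by
  have key : ∀ i j : Fin n, g i j
      = (if i < j then g i j else 0) + (if j < i then g i j else 0)
        + (if i = j then g i j else 0) := by
    intro i j
    rcases lt_trichotomy i j with h | h | h
    · simp [h, asymm h, h.ne]
    · simp [h]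
    · simp [h, asymm h, h.ne']
  calc ∑ i, ∑ j, g i j
      = ∑ i, ∑ j, ((if i < j then g i j else 0) + (if j < i then g i j else 0)
        + (if i = j then g i j else 0)) := by
        apply Finset.sum_congr rfl; intro i _; apply Finset.sum_congr rfl; intro j _
        exact key i j
    _ = (∑ i, ∑ j, if i < j then g i j else 0) + (∑ i, ∑ j, if j < i then g i j else 0)
        + ∑ i, ∑ j, if i = j then g i j else 0 := by
        simp [Finset.sum_add_distrib]
    _ = 2 * (∑ i, ∑ j, if i < j then g i j else 0) + ∑ i, g i i := by
        have h2 : (∑ i, ∑ j, if j < i then g i j else 0)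
            = ∑ i, ∑ j, if i < j then g i j else 0 := by
          rw [Finset.sum_comm]
          apply Finset.sum_congr rfl; intro i _; apply Finset.sum_congr rfl; intro j _
          rw [hg]
        have h3 : (∑ i, ∑ j : Fin n, if i = j then g i j else 0) = ∑ i, g i i := by
          apply Finset.sum_congr rfl; intro i _
          simp
        rw [h2, h3]; ring

lemma swaps_eq_image :
    (Finset.univ.filter (fun σ : Perm (Fin n) => σ.support.card = 2))
      = (Finset.univ.filter (fun p : Fin n × Fin n => p.1 < p.2)).image
          (fun p => Equiv.swap p.1 p.2) := by
  ext σ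
  simp only [Finset.mem_filter, Finset.mem_univ, true_and, Finset.mem_image]
  constructor
  · intro h
    obtain ⟨x, y, hxy, rfl⟩ := Equiv.Perm.card_support_eq_two.1 h
    rcases hxy.lt_or_gt with hlt | hlt
    · exact ⟨(x, y), hlt, rfl⟩
    · exact ⟨(y, x), hlt, (Equiv.swap_comm x y).symm⟩
  · rintro ⟨p, hp, rfl⟩
    exact Equiv.Perm.card_support_swap hp.ne

lemma swap_inj_on :
    Set.InjOn (fun p : Fin n × Fin n => Equiv.swap p.1 p.2)
      (Finset.univ.filter (fun p : Fin n × Fin n => p.1 < p.2)) := by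
  rintro ⟨a, b⟩ ha ⟨c, d⟩ hc h
  simp only [Finset.coe_filter, Set.mem_setOf_eq] at ha hc
  have hab : a ≠ b := ha.2.ne
  have hcd : c ≠ d := hc.2.ne
  have hsupp := congrArg Equiv.Perm.support h
  rw [Equiv.Perm.support_swap hab, Equiv.Perm.support_swap hcd] at hsupp
  have hamem : a ∈ ({c, d} : Finset (Fin n)) := by
    rw [← hsupp]; simp
  have hbmem : b ∈ ({c, d} : Finset (Fin n)) := by
    rw [← hsupp]; simp
  have hcmem : c ∈ ({a, b} : Finset (Fin n)) := by
    rw [hsupp]; simp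
  simp only [Finset.mem_insert, Finset.mem_singleton] at hamem hbmem
  have h1 : (a : ℕ) < b := ha.2
  have h2 : (c : ℕ) < d := hc.2
  have hA : (a:ℕ) = c ∨ (a:ℕ) = d := by
    rcases hamem with h' | h'
    · exact Or.inl (congrArg Fin.val h')
    · exact Or.inr (congrArg Fin.val h')
  have hB : (b:ℕ) = c ∨ (b:ℕ) = d := by
    rcases hbmem with h' | h'
    · exact Or.inl (congrArg Fin.val h')
    · exact Or.inr (congrArg Fin.val h')
  have hC : (c:ℕ) = a ∨ (c:ℕ) = b := by
    have : c ∈ ({a, b} : Finset (Fin n)) := by rw [hsupp]; simp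
    simp only [Finset.mem_insert, Finset.mem_singleton] at this
    rcases this with h' | h'
    · exact Or.inl (congrArg Fin.val h')
    · exact Or.inr (congrArg Fin.val h')
  have hac : (a:ℕ) = c ∧ (b:ℕ) = d := by omega
  exact Prod.ext (Fin.ext hac.1) (Fin.ext hac.2)

lemma swap_term_eq (hn : 2 ≤ n) (M : Matrix (Fin n) (Fin n) ℤ) (a b : Fin n) (hab : a ≠ b) :
    (Equiv.Perm.sign (Equiv.swap a b) : ℤ) *
        ((∏ i ∈ (Equiv.swap a b).supportᶜ, ((X:ℤ[X]) + Polynomial.C (M i i)))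
          * Polynomial.C (∏ i ∈ (Equiv.swap a b).support, M ((Equiv.swap a b) i) i)).coeff (n-2)
      = -(M a b * M b a) := by
  have hsupp : (Equiv.swap a b).support = {a, b} := Equiv.Perm.support_swap hab
  have hcard : (Equiv.swap a b).supportᶜ.card = n - 2 := by
    rw [Finset.card_compl, hsupp]
    simp [Finset.card_insert_of_notMem, hab]
  have hmonic : (∏ i ∈ (Equiv.swap a b).supportᶜ, ((X:ℤ[X]) + Polynomial.C (M i i))).Monic :=
    Polynomial.monic_prod_of_monic _ _ (fun i _ => Polynomial.monic_X_add_C _)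
  have hdeg : (∏ i ∈ (Equiv.swap a b).supportᶜ, ((X:ℤ[X]) + Polynomial.C (M i i))).natDegree
      = n - 2 := by
    rw [Polynomial.natDegree_prod_of_monic _ _ (fun i _ => Polynomial.monic_X_add_C _)]
    have h1 : ∀ i ∈ (Equiv.swap a b).supportᶜ, ((X:ℤ[X]) + Polynomial.C (M i i)).natDegree = 1 :=
      fun i _ => Polynomial.natDegree_X_add_C _
    rw [Finset.sum_congr rfl h1, Finset.sum_const, smul_eq_mul, mul_one, hcard]
  have hcoeff : (∏ i ∈ (Equiv.swap a b).supportᶜ, ((X:ℤ[X]) + Polynomial.C (M i i))).coeff (n-2)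
      = 1 := by
    rw [← hdeg]; exact hmonic.coeff_natDegree
  rw [Polynomial.coeff_mul_C, hcoeff, one_mul]
  have hprod : (∏ i ∈ (Equiv.swap a b).support, M ((Equiv.swap a b) i) i)
      = M b a * M a b := by
    rw [hsupp, Finset.prod_insert (by simpa using hab), Finset.prod_singleton,
      Equiv.swap_apply_left, Equiv.swap_apply_right]
  rw [hprod, Equiv.Perm.sign_swap hab]
  push_cast
  ring

lemma coeff_det_second (hn : 2 ≤ n) (M : Matrix (Fin n) (Fin n) ℤ) :
    2 * (((X : ℤ[X]) • (1 : Matrix (Fin n) (Fin n) ℤ[X]) + M.map Polynomial.C).det).coeff (n-2)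
      = (Matrix.trace M)^2 - Matrix.trace (M*M) := by
  rw [coeff_det_eq_sum]
  set F : Perm (Fin n) → ℤ := fun σ => (Equiv.Perm.sign σ : ℤ) *
      ((∏ i ∈ σ.supportᶜ, ((X:ℤ[X]) + Polynomial.C (M i i)))
        * Polynomial.C (∏ i ∈ σ.support, M (σ i) i)).coeff (n-2) with hF
  have hrestrict : ∑ σ : Perm (Fin n), F σ
      = ∑ σ ∈ Finset.univ.filter (fun σ : Perm (Fin n) => σ.support.card ≤ 2), F σ := by
    refine (Finset.sum_subset (Finset.filter_subset _ _) ?_).symm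
    intro σ _ hσ
    rw [Finset.mem_filter] at hσ
    push_neg at hσ
    have h3 : 2 < σ.support.card := hσ (Finset.mem_univ σ)
    have hle : σ.support.card ≤ n := by simpa using Finset.card_le_univ σ.support
    have hlt : σ.supportᶜ.card < n - 2 := by
      rw [Finset.card_compl]; simp only [Fintype.card_fin]; omega
    rw [hF]
    simp only
    rw [coeff_vanish M σ hlt, mul_zero]
  rw [hrestrict]
  have hins : Finset.univ.filter (fun σ : Perm (Fin n) => σ.support.card ≤ 2)
      = insert 1 (Finset.univ.filter (fun σ : Perm (Fin n) => σ.support.card = 2)) := by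
    ext σ
    simp only [Finset.mem_filter, Finset.mem_univ, true_and, Finset.mem_insert]
    constructor
    · intro h
      rcases eq_or_ne σ 1 with rfl | hne
      · exact Or.inl rfl
      · right
        have h1 := Equiv.Perm.one_lt_card_support_of_ne_one hne
        omega
    · rintro (rfl | h)
      · simp
      · omega
  rw [hins, Finset.sum_insert (by simp)]
  have hone : F 1 = ∑ t ∈ (Finset.univ : Finset (Fin n)).powersetCard 2, ∏ i ∈ t, M i i := by
    rw [hF]
    simp only [Equiv.Perm.support_one, Finset.compl_empty, Equiv.Perm.sign_one, Units.val_one,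
      Int.cast_one, one_mul, Finset.prod_empty, _root_.map_one, mul_one]
    rw [Finset.prod_X_add_C_coeff (Finset.univ : Finset (Fin n)) (fun i => M i i)
      (k := n - 2) (by simp [Nat.sub_le])]
    have hcc : (Finset.univ : Finset (Fin n)).card - (n - 2) = 2 := by
      simp only [Finset.card_univ, Fintype.card_fin]; omega
    rw [hcc]
  have hswap : ∑ σ ∈ Finset.univ.filter (fun σ : Perm (Fin n) => σ.support.card = 2), F σ
      = ∑ p ∈ Finset.univ.filter (fun p : Fin n × Fin n => p.1 < p.2),
          -(M p.1 p.2 * M p.2 p.1) := by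
    rw [swaps_eq_image, Finset.sum_image (fun p hp q hq h => swap_inj_on hp hq h)]
    apply Finset.sum_congr rfl
    intro p hp
    rw [Finset.mem_filter] at hp
    exact swap_term_eq hn M p.1 p.2 hp.2.ne
  rw [hone, hswap]
  have e2 := two_mul_esymm_two (Finset.univ : Finset (Fin n)) (fun i => M i i)
  have htr : Matrix.trace M = ∑ i, M i i := by simp [Matrix.trace, Matrix.diag]
  have htr2 : Matrix.trace (M*M) = ∑ i, ∑ j, M i j * M j i := by
    simp [Matrix.trace, Matrix.diag, Matrix.mul_apply]
  have hsplit := double_sum_split (fun i j => M i j * M j i) (fun i j => mul_comm _ _)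
  have hpairs : ∑ p ∈ Finset.univ.filter (fun p : Fin n × Fin n => p.1 < p.2),
        (M p.1 p.2 * M p.2 p.1)
      = ∑ i, ∑ j, if i < j then M i j * M j i else 0 := by
    rw [Finset.sum_filter, Fintype.sum_prod_type]
  rw [htr, htr2]
  have hsplit' : ∑ i, ∑ j, M i j * M j i
      = 2 * (∑ i, ∑ j, if i < j then M i j * M j i else 0) + ∑ i, M i i * M i i := hsplit
  have hsq : ∑ i, (M i i)^2 = ∑ i, M i i * M i i := by
    apply Finset.sum_congr rfl; intro i _; ring
  have hneg : ∑ p ∈ Finset.univ.filter (fun p : Fin n × Fin n => p.1 < p.2),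
        -(M p.1 p.2 * M p.2 p.1)
      = -∑ p ∈ Finset.univ.filter (fun p : Fin n × Fin n => p.1 < p.2),
        (M p.1 p.2 * M p.2 p.1) := by
    rw [Finset.sum_neg_distrib]
  rw [hneg, hpairs, mul_add]
  linarith [e2, hsplit', hsq]

/-- Corollary of Theorem 1.1: for a bipartite quiver without parallel arrows and
without a full subquiver of type `Ã₂,₂` (i.e. `(N Nᵀ)_{ij} ≤ 1` for `i ≠ j`), the
first two coefficients of the Coxeter polynomial depend only on the vertex degrees. -/
theorem coxeter_coeffs_depend_only_on_degrees (n : ℕ) (hn : 2 ≤ n)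
    (N : Matrix (Fin n) (Fin n) ℤ)
    (h01 : ∀ i j, N i j = 0 ∨ N i j = 1) (hN2 : N * N = 0)
    (hA22 : ∀ i j, i ≠ j → (N * Nᵀ) i j ≤ 1) :
    let C : Matrix (Fin n) (Fin n) ℤ := 1 - N
    let φ : ℤ[X] := ((X : ℤ[X]) • C.map Polynomial.C + Cᵀ.map Polynomial.C).det
    let d : Fin n → ℤ := fun i => (∑ j, N i j) + (∑ j, N j i)
    let e : ℤ := (∑ i, d i) / 2
    φ.coeff (n - 1) = n - e ∧
      2 * φ.coeff (n - 2) =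
        (n - e) * (n - 1 - e) + 2 * e - ∑ i, d i * (d i - 1) := by
  intro Cm φ d e
  have hNge : ∀ i j, 0 ≤ N i j := fun i j => by rcases h01 i j with h | h <;> simp [h]
  have hzero : ∀ a b c, N a b * N b c = 0 := by
    intro a b c
    have h := congrFun (congrFun hN2 a) c
    rw [Matrix.mul_apply, Matrix.zero_apply] at h
    exact (Finset.sum_eq_zero_iff_of_nonneg
      (fun k _ => mul_nonneg (hNge a k) (hNge k c))).1 h b (Finset.mem_univ b)
  have hdiag : ∀ i, N i i = 0 := by
    intro i
    rcases h01 i i with h | h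
    · exact h
    · have := hzero i i i
      rw [h] at this
      norm_num at this
  -- determinant of 1 - N is 1
  have detC : Cm.det = 1 := by
    show (1 - N).det = 1
    rw [Matrix.det_apply]
    rw [Finset.sum_eq_single 1]
    · have : ∀ i : Fin n, (1 - N) ((1 : Equiv.Perm (Fin n)) i) i = 1 := by
        intro i
        simp [Matrix.sub_apply, Matrix.one_apply, hdiag i]
      rw [Finset.prod_congr rfl (fun i _ => this i)]
      simp
    · intro σ _ hσ
      obtain ⟨i, hi⟩ : ∃ i, σ i ≠ i := by
        by_contra h
        push_neg at h
        exact hσ (Equiv.ext h)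
      have hprodzero : ∏ k, (1 - N) (σ k) k = 0 := by
        rcases h01 (σ i) i with h | h
        · refine Finset.prod_eq_zero (Finset.mem_univ i) ?_
          simp [Matrix.sub_apply, Matrix.one_apply_ne hi, h]
        · have hi' : σ (σ i) ≠ σ i := fun hc => hi (σ.injective hc)
          rcases h01 (σ (σ i)) (σ i) with h' | h'
          · refine Finset.prod_eq_zero (Finset.mem_univ (σ i)) ?_
            simp [Matrix.sub_apply, Matrix.one_apply_ne hi', h']
          · exfalso
            have := hzero (σ (σ i)) (σ i) i
            rw [h, h'] at this
            norm_num at this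
      rw [hprodzero, smul_zero]
    · intro h
      exact absurd (Finset.mem_univ 1) h
  -- helper zero products
  have hNT2 : Nᵀ * Nᵀ = 0 := by
    rw [← Matrix.transpose_mul, hN2, Matrix.transpose_zero]
  have hNP : N * (N * Nᵀ) = 0 := by
    rw [← Matrix.mul_assoc, hN2, Matrix.zero_mul]
  have hPNT : (N * Nᵀ) * Nᵀ = 0 := by
    rw [Matrix.mul_assoc, hNT2, Matrix.mul_zero]
  set A : Matrix (Fin n) (Fin n) ℤ := 1 + N - Nᵀ - N * Nᵀ with hA
  have hmul : Cm * A = Cmᵀ := by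
    show (1 - N) * A = (1 - N)ᵀ
    have h1 : (1 - N) * (1 + N - Nᵀ - N * Nᵀ)
        = (1 - Nᵀ) - (N * N) * (1 - Nᵀ) := by noncomm_ring
    rw [hA, h1, hN2, Matrix.zero_mul, sub_zero, Matrix.transpose_sub, Matrix.transpose_one]
  have hfact : (X : ℤ[X]) • Cm.map Polynomial.C + Cmᵀ.map Polynomial.C
      = (Cm.map Polynomial.C) * ((X:ℤ[X]) • (1 : Matrix (Fin n) (Fin n) ℤ[X])
          + A.map Polynomial.C) := by
    rw [mul_add, Matrix.mul_smul, mul_one, ← Matrix.map_mul, hmul]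
  have hdet : φ = ((X:ℤ[X]) • (1 : Matrix (Fin n) (Fin n) ℤ[X]) + A.map Polynomial.C).det := by
    show ((X : ℤ[X]) • Cm.map Polynomial.C + Cmᵀ.map Polynomial.C).det = _
    rw [hfact, Matrix.det_mul]
    have hdetmap : (Cm.map (Polynomial.C : ℤ →+* ℤ[X])).det = Polynomial.C Cm.det := by
      rw [show Cm.map ⇑(Polynomial.C : ℤ →+* ℤ[X])
          = (Polynomial.C : ℤ →+* ℤ[X]).mapMatrix Cm from rfl, ← RingHom.map_det]
    rw [hdetmap, detC, _root_.map_one, one_mul]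
  -- trace facts
  set t : ℤ := Matrix.trace (N * Nᵀ) with ht
  have htrN : Matrix.trace N = 0 := by
    simp [Matrix.trace, Matrix.diag, hdiag]
  have htrNT : Matrix.trace Nᵀ = 0 := by
    rw [Matrix.trace_transpose, htrN]
  have htrA : Matrix.trace A = (n : ℤ) - t := by
    rw [hA, Matrix.trace_sub, Matrix.trace_sub, Matrix.trace_add, Matrix.trace_one, htrN, htrNT]
    simp [Fintype.card_fin, ht]
  have expand : (1 + N - Nᵀ - N*Nᵀ) * (1 + N - Nᵀ - N*Nᵀ)
      = (1 + N + N - Nᵀ - Nᵀ - (N*Nᵀ) - (N*Nᵀ) - (N*Nᵀ) - Nᵀ*N + Nᵀ*(N*Nᵀ) - (N*Nᵀ)*N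
          + (N*Nᵀ)*(N*Nᵀ))
        + (N*N - N*(N*Nᵀ) + Nᵀ*Nᵀ + (N*Nᵀ)*Nᵀ) := by noncomm_ring
  have hAA : A * A
      = 1 + N + N - Nᵀ - Nᵀ - (N*Nᵀ) - (N*Nᵀ) - (N*Nᵀ) - Nᵀ*N + Nᵀ*(N*Nᵀ) - (N*Nᵀ)*N
          + (N*Nᵀ)*(N*Nᵀ) := by
    rw [hA, expand, hN2, hNP, hNT2, hPNT]
    simp
  have htrAA : Matrix.trace (A * A) = (n:ℤ) - 4*t + Matrix.trace ((N*Nᵀ)*(N*Nᵀ)) := by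
    rw [hAA]
    have e1 : Matrix.trace (Nᵀ * N) = t := by rw [Matrix.trace_mul_comm]
    have e2 : Matrix.trace (Nᵀ * (N * Nᵀ)) = 0 := by
      rw [Matrix.trace_mul_comm, hPNT, Matrix.trace_zero]
    have e3 : Matrix.trace ((N*Nᵀ) * N) = 0 := by
      rw [Matrix.trace_mul_comm, hNP, Matrix.trace_zero]
    simp only [Matrix.trace_add, Matrix.trace_sub, Matrix.trace_one, htrN, htrNT, e1, e2, e3,
      ← ht]
    simp [Fintype.card_fin]
    ring
  set r : Fin n → ℤ := fun i => ∑ j, N i j with hr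
  set c : Fin n → ℤ := fun i => ∑ j, N j i with hc
  have hPij : ∀ i j, (N * Nᵀ) i j = ∑ k, N i k * N j k := by
    intro i j; simp [Matrix.mul_apply, Matrix.transpose_apply]
  have hPsymm : ∀ i j, (N*Nᵀ) j i = (N*Nᵀ) i j := by
    intro i j; rw [hPij, hPij]; exact Finset.sum_congr rfl (fun k _ => mul_comm _ _)
  have hPdiag : ∀ i, (N*Nᵀ) i i = r i := by
    intro i; rw [hPij]
    apply Finset.sum_congr rfl; intro k _
    rcases h01 i k with h | h <;> simp [h]
  have hPnn : ∀ i j, 0 ≤ (N*Nᵀ) i j := by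
    intro i j; rw [hPij]
    exact Finset.sum_nonneg fun k _ => mul_nonneg (hNge i k) (hNge j k)
  have hPsq : ∀ i j, i ≠ j → (N*Nᵀ) i j * (N*Nᵀ) i j = (N*Nᵀ) i j := by
    intro i j hij
    have h1 := hPnn i j
    have h2 := hA22 i j hij
    have h3 : (N*Nᵀ) i j = 0 ∨ (N*Nᵀ) i j = 1 := by omega
    rcases h3 with h | h <;> simp [h]
  have htrP : Matrix.trace (N*Nᵀ) = ∑ i, r i := by
    simp only [Matrix.trace, Matrix.diag]
    exact Finset.sum_congr rfl (fun i _ => hPdiag i)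
  have hT : t = ∑ i, r i := ht.trans htrP
  have hrc : ∀ i, r i * c i = 0 := by
    intro i
    rcases eq_or_ne (r i) 0 with h | h
    · rw [h, zero_mul]
    · have hc0 : c i = 0 := by
        by_contra hc0
        have h' : (∑ j, N i j) ≠ 0 := h
        have h'' : (∑ j, N j i) ≠ 0 := hc0
        obtain ⟨j, _, hj⟩ := Finset.exists_ne_zero_of_sum_ne_zero h'
        obtain ⟨k, _, hk⟩ := Finset.exists_ne_zero_of_sum_ne_zero h''
        have h1 : N i j = 1 := by rcases h01 i j with h1 | h1; exact absurd h1 hj; exact h1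
        have h2 : N k i = 1 := by rcases h01 k i with h2 | h2; exact absurd h2 hk; exact h2
        have h3 := hzero k i j
        rw [h1, h2] at h3
        norm_num at h3
      rw [hc0, mul_zero]
  have hd : ∀ i, d i = r i + c i := fun i => rfl
  have hsumd : ∑ i, d i = 2 * t := by
    have hcc : ∑ i, c i = ∑ i, r i := by
      show ∑ i, ∑ j, N j i = ∑ i, ∑ j, N i j
      exact Finset.sum_comm
    calc ∑ i, d i = ∑ i, (r i + c i) := Finset.sum_congr rfl (fun i _ => hd i)
      _ = (∑ i, r i) + ∑ i, c i := Finset.sum_add_distrib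
      _ = 2 * t := by rw [hcc, hT]; ring
  have he : e = t := by
    show (∑ i, d i) / 2 = t
    rw [hsumd, Int.mul_ediv_cancel_left _ (by norm_num)]
  have hdd : ∑ i, d i * d i = (∑ i, r i * r i) + ∑ i, c i * c i := by
    rw [← Finset.sum_add_distrib]
    apply Finset.sum_congr rfl
    intro i _
    rw [hd i]
    linear_combination (2:ℤ) * hrc i
  have hdouble : ∑ i, ∑ j, (N*Nᵀ) i j = ∑ k, c k * c k := by
    calc ∑ i, ∑ j, (N*Nᵀ) i j = ∑ i, ∑ j, ∑ k, N i k * N j k :=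
          Finset.sum_congr rfl (fun i _ => Finset.sum_congr rfl (fun j _ => hPij i j))
      _ = ∑ i, ∑ k, ∑ j, N i k * N j k := Finset.sum_congr rfl (fun i _ => Finset.sum_comm)
      _ = ∑ k, ∑ i, ∑ j, N i k * N j k := Finset.sum_comm
      _ = ∑ k, (∑ i, N i k) * (∑ j, N j k) := by
          refine Finset.sum_congr rfl (fun k _ => ?_)
          rw [Finset.sum_mul_sum]
      _ = ∑ k, c k * c k := rfl
  have htrPP : Matrix.trace ((N*Nᵀ)*(N*Nᵀ)) = (∑ i, d i * d i) - t := by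
    have step1 : Matrix.trace ((N*Nᵀ)*(N*Nᵀ)) = ∑ i, ∑ j, (N*Nᵀ) i j * (N*Nᵀ) j i := by
      simp [Matrix.trace, Matrix.diag, Matrix.mul_apply]
    have step2 : ∀ i j : Fin n, (N*Nᵀ) i j * (N*Nᵀ) j i
        = (N*Nᵀ) i j + (if i = j then r i * r i - r i else 0) := by
      intro i j
      rcases eq_or_ne i j with rfl | hij
      · simp [hPdiag i]
      · rw [hPsymm i j, hPsq i j hij, if_neg hij, add_zero]
    rw [step1]
    calc ∑ i, ∑ j, (N*Nᵀ) i j * (N*Nᵀ) j i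
        = ∑ i, ∑ j, ((N*Nᵀ) i j + (if i = j then r i * r i - r i else 0)) :=
          Finset.sum_congr rfl (fun i _ => Finset.sum_congr rfl (fun j _ => step2 i j))
      _ = (∑ i, ∑ j, (N*Nᵀ) i j) + ∑ i, (r i * r i - r i) := by
          rw [← Finset.sum_add_distrib]
          refine Finset.sum_congr rfl (fun i _ => ?_)
          rw [Finset.sum_add_distrib]
          congr 1
          simp
      _ = (∑ i, d i * d i) - t := by
          rw [hdouble, Finset.sum_sub_distrib, hdd, hT]
          ring
  have h1 : φ.coeff (n - 1) = (n:ℤ) - t := by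
    rw [hdet, coeff_det_top (by omega) A, htrA]
  have h2 : 2 * φ.coeff (n - 2)
      = ((n:ℤ) - t)^2 - ((n:ℤ) - 4*t + ((∑ i, d i * d i) - t)) := by
    rw [hdet, coeff_det_second hn A, htrA, htrAA, htrPP]
  have hdd1 : ∑ i, d i * (d i - 1) = (∑ i, d i * d i) - 2*t := by
    have hh : ∀ i : Fin n, d i * (d i - 1) = d i * d i - d i := fun i => by ring
    rw [Finset.sum_congr rfl (fun i _ => hh i), Finset.sum_sub_distrib, hsumd]
  constructor
  · rw [h1, he]
  · rw [he]
    linear_combination h2 + hdd1
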